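/- Every rank-2 positive frieze sequence with exponents (1,3) is periodic with period 8: if x : ℤ → ℝ satisfies x(i) > 0 for all i, x(i−1)·x(i+1) = x(i) + 1 for odd i, and x(i−1)·x(i+1) = x(i)³ + 1 for even i, then x(i+8) = x(i) for all i ∈ ℤ. (This is the G₂ case bc = 3 of the rank-2 classification.) -/

import Mathlib

private lemma g2core (a b x2 x3 x4 x5 x6 x7 x8 x9 : ℝ) (ha : 0 < a) (hb : 0 < b)
    (r1 : a * x2 = b + 1)
    (r2 : b * x3 = x2^3 + 1)
    (r3 : x2 * x4 = x3 + 1)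
    (r4 : x3 * x5 = x4^3 + 1)
    (r5 : x4 * x6 = x5 + 1)
    (r6 : x5 * x7 = x6^3 + 1)
    (r7 : x6 * x8 = x7 + 1)
    (r8 : x7 * x9 = x8^3 + 1) : x8 = a ∧ x9 = b := by
  have e2 : x2 = (b+1)/a := by rw [eq_div_iff (by positivity)]; linear_combination r1
  have e3 : x3 = (a^3+(b+1)^3)/(a^3*b) := by
    rw [e2] at r2; rw [eq_div_iff (by positivity)]; field_simp at r2
    linear_combination r2
  have e4 : x4 = (a^3+(b+1)^2)/(a^2*b) := by
    rw [e2, e3] at r3; rw [eq_div_iff (by positivity)]; field_simp at r3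
    apply mul_left_cancel₀ (show (a*(b+1)) ≠ 0 by positivity)
    linear_combination a * r3
  have e5 : x5 = (a^6+3*a^3*b+2*a^3+(b+1)^3)/(a^3*b^2) := by
    rw [e3, e4] at r4; rw [eq_div_iff (by positivity)]; field_simp at r4
    apply mul_left_cancel₀ (show (a^3*b*(a^3+(b+1)^3)) ≠ 0 by positivity)
    linear_combination a^3*b * r4
  have e6 : x6 = (a^3+b+1)/(a*b) := by
    rw [e4, e5] at r5; rw [eq_div_iff (by positivity)]; field_simp at r5
    apply mul_left_cancel₀ (show (a^2*b*(a^3+(b+1)^2)) ≠ 0 by positivity)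
    linear_combination a^2*b * r5
  have e7 : x7 = (a^3+1)/b := by
    rw [e5, e6] at r6; rw [eq_div_iff (by positivity)]; field_simp at r6
    apply mul_left_cancel₀ (show (a^3*b^2*(a^6+3*a^3*b+2*a^3+(b+1)^3)) ≠ 0 by positivity)
    linear_combination a^3*b^2 * r6
  have e8 : x8 = a := by
    rw [e6, e7] at r7; field_simp at r7
    apply mul_left_cancel₀ (show (b*(a^3+b+1)) ≠ 0 by positivity)
    linear_combination b * r7
  have e9 : x9 = b := by
    rw [e7, e8] at r8; field_simp at r8
    exact r8
  exact ⟨e8, e9⟩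


/-- Every rank-2 positive frieze sequence with exponents `(1,3)` (type `G₂`)
is periodic with period `8`. -/
theorem rank2_frieze_period_eight (x : ℤ → ℝ)
    (hpos : ∀ i : ℤ, 0 < x i)
    (hodd : ∀ i : ℤ, Odd i → x (i - 1) * x (i + 1) = x i + 1)
    (heven : ∀ i : ℤ, Even i → x (i - 1) * x (i + 1) = x i ^ 3 + 1) :
    ∀ i : ℤ, x (i + 8) = x i := by
  have key : ∀ m : ℤ, x (m + m + 8) = x (m + m) ∧ x (m + m + 9) = x (m + m + 1) := by
    intro m
    set j := m + m with hj
    have ro : ∀ k : ℤ, Odd (j + k) → x (j + (k-1)) * x (j + (k+1)) = x (j + k) + 1 := by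
      intro k hk
      have h := hodd (j + k) hk
      rw [show j + k - 1 = j + (k-1) by ring, show j + k + 1 = j + (k+1) by ring] at h
      exact h
    have re : ∀ k : ℤ, Even (j + k) → x (j + (k-1)) * x (j + (k+1)) = x (j + k) ^ 3 + 1 := by
      intro k hk
      have h := heven (j + k) hk
      rw [show j + k - 1 = j + (k-1) by ring, show j + k + 1 = j + (k+1) by ring] at h
      exact h
    have r1 := ro 1 ⟨m, by omega⟩
    have r2 := re 2 ⟨m+1, by omega⟩
    have r3 := ro 3 ⟨m+1, by omega⟩
    have r4 := re 4 ⟨m+2, by omega⟩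
    have r5 := ro 5 ⟨m+2, by omega⟩
    have r6 := re 6 ⟨m+3, by omega⟩
    have r7 := ro 7 ⟨m+3, by omega⟩
    have r8 := re 8 ⟨m+4, by omega⟩
    norm_num at r1 r2 r3 r4 r5 r6 r7 r8
    have H := g2core (x j) (x (j+1)) (x (j+2)) (x (j+3)) (x (j+4)) (x (j+5))
      (x (j+6)) (x (j+7)) (x (j+8)) (x (j+9)) (hpos j) (hpos (j+1))
      r1 r2 r3 r4 r5 r6 r7 r8
    exact H
  intro i
  rcases Int.even_or_odd i with ⟨m, rfl⟩ | ⟨m, rfl⟩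
  · exact (key m).1
  · have H := (key m).2
    rw [show m + m + 9 = 2*m+1+8 by ring, show m + m + 1 = 2*m+1 by ring] at H
    exact H
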